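/- Fix γ ∈ (0,1) and μ > 0. Let g_0 : ℝ → ℝ ∪ {−∞} satisfy sup g_0 = γ, and define recursively for n ≥ 1: p_n(x) = π[ 1 − γ + sup_{y∈ℝ} ( g_{n−1}(y) − min(1,μ)·max(x − y, 0) ) ], s_n = sup{ x ∈ ℝ : p_n(x) ≥ γ }, and g_n = π ∘ Φ_{s_n}[g_{n−1}]. Then for all n ≥ 1 one has s_n = sup{ ξ ∈ ℝ : sup_{x∈ℝ} Φ_ξ[g_{n−1}](x) ≥ γ } and g_n = π ∘ Φ_{s_n}[g_{n−1}]. -/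

import Mathlib

/-- `π(x) = x` if `x ≥ 0`, and `−∞` otherwise. -/
noncomputable def piE (x : EReal) : EReal := if 0 ≤ x then x else ⊥

/-- `Φ_ξ[g](x) = 1 − γ + sup_y ( g(y) − |x − y| ) − μ·max(ξ − x, 0)`. -/
noncomputable def Phi (γ μ : ℝ) (g : ℝ → EReal) (ξ x : ℝ) : EReal :=
  ((1 - γ : ℝ) : EReal) + (⨆ y : ℝ, g y - ((|x - y| : ℝ) : EReal))
    - ((μ * max (ξ - x) 0 : ℝ) : EReal)

/-- The phenotypic profile
`p(x) = π[ 1 − γ + sup_y ( g(y) − min(1,μ)·max(x − y, 0) ) ]`. -/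
noncomputable def pFun (γ μ : ℝ) (g : ℝ → EReal) (x : ℝ) : EReal :=
  piE (((1 - γ : ℝ) : EReal) +
    ⨆ y : ℝ, g y - ((min 1 μ * max (x - y) 0 : ℝ) : EReal))

/-- The phenotypic threshold `s = sup{ x ∈ ℝ : p(x) ≥ γ }` built from a
genotypic profile `g`. -/
noncomputable def sFun (γ μ : ℝ) (g : ℝ → EReal) : ℝ :=
  sSup {ξ : ℝ | (γ : EReal) ≤ pFun γ μ g ξ}

/-- The recursive dynamic: `g_n = π ∘ Φ_{s_n}[g_{n−1}]` where
`s_n = sup{ x : p_n(x) ≥ γ }` and `p_n = pFun γ μ g_{n−1}`. -/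
noncomputable def gseq (γ μ : ℝ) (g0 : ℝ → EReal) : ℕ → ℝ → EReal
  | 0 => g0
  | n + 1 => fun x =>
      piE (Phi γ μ (gseq γ μ g0 n) (sFun γ μ (gseq γ μ g0 n)) x)

/-- Adding a real constant commutes with suprema in `EReal`. -/
lemma coe_add_iSup (c : ℝ) (f : ℝ → EReal) :
    (c : EReal) + ⨆ i, f i = ⨆ i, ((c : EReal) + f i) := by
  refine le_antisymm ?_ (iSup_le fun i => add_le_add_right (le_iSup f i) c)
  rw [add_comm]
  apply EReal.add_le_of_le_sub
  refine iSup_le fun i => ?_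
  have h : f i = ((c : EReal) + f i) - (c : ℝ) := by
    rw [add_comm, EReal.add_sub_cancel_right]
  rw [h]
  exact EReal.sub_le_sub (le_iSup (fun i => (c : EReal) + f i) i) le_rfl

/-- Subtracting a real constant commutes with suprema in `EReal`. -/
lemma iSup_sub_coe (c : ℝ) (f : ℝ → EReal) :
    (⨆ i, f i) - (c : EReal) = ⨆ i, (f i - (c : EReal)) := by
  simp only [sub_eq_add_neg, ← EReal.coe_neg, add_comm _ ((-c : ℝ) : EReal)]
  exact coe_add_iSup (-c) f

lemma iSup_add_coe_attained {a : EReal} {r : ℝ → ℝ} {R : ℝ}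
    (hub : ∀ x, r x ≤ R) (hat : ∃ x, r x = R) :
    (⨆ x : ℝ, a + ((r x : ℝ) : EReal)) = a + (R : EReal) := by
  obtain ⟨x₀, hx₀⟩ := hat
  refine le_antisymm (iSup_le fun x => add_le_add_right (EReal.coe_le_coe_iff.2 (hub x)) a) ?_
  rw [← hx₀]
  exact le_iSup (fun x => a + ((r x : ℝ) : EReal)) x₀

lemma real_bound (μ ξ y : ℝ) (hμ : 0 < μ) (x : ℝ) :
    -|x - y| - μ * max (ξ - x) 0 ≤ -(min 1 μ * max (ξ - y) 0) := by
  have h1 : max (ξ - y) 0 ≤ max (ξ - x) 0 + |x - y| := by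
    rcases le_total (ξ - y) 0 with h | h
    · simp [max_eq_right h]
      positivity
    · have : ξ - y ≤ max (ξ - x) 0 + |x - y| := by
        have := le_abs_self (x - y)
        have := le_max_left (ξ - x) 0
        linarith
      rw [max_eq_left h]; exact this
  have hm1 : min 1 μ ≤ 1 := min_le_left _ _
  have hm2 : min 1 μ ≤ μ := min_le_right _ _
  have hm0 : 0 ≤ min 1 μ := le_min zero_le_one hμ.le
  nlinarith [abs_nonneg (x - y), le_max_right (ξ - x) 0, le_max_right (ξ - y) 0]

lemma real_attained (μ ξ y : ℝ) (hμ : 0 < μ) :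
    ∃ x : ℝ, -|x - y| - μ * max (ξ - x) 0 = -(min 1 μ * max (ξ - y) 0) := by
  rcases le_total μ 1 with h | h
  · exact ⟨y, by rw [min_eq_right h]; simp⟩
  · rcases le_total ξ y with h2 | h2
    · refine ⟨y, ?_⟩
      rw [min_eq_left h]
      simp [max_eq_right (by linarith : ξ - y ≤ 0)]
    · refine ⟨ξ, ?_⟩
      rw [min_eq_left h]
      rw [abs_of_nonneg (by linarith : (0:ℝ) ≤ ξ - y)]
      simp [max_eq_left (by linarith : (0:ℝ) ≤ ξ - y)]

/-- The supremum of `Φ_ξ[g]` coincides with the argument of `π` in `pFun`. -/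
lemma sup_Phi (γ μ : ℝ) (hμ : 0 < μ) (g : ℝ → EReal) (ξ : ℝ) :
    (⨆ x : ℝ, Phi γ μ g ξ x)
      = ((1 - γ : ℝ) : EReal) + ⨆ y : ℝ, g y - ((min 1 μ * max (ξ - y) 0 : ℝ) : EReal) := by
  have step1 : ∀ x : ℝ, Phi γ μ g ξ x
      = ⨆ y : ℝ, (g y + (((1 - γ) - |x - y| - μ * max (ξ - x) 0 : ℝ) : EReal)) := by
    intro x
    rw [Phi, coe_add_iSup, iSup_sub_coe]
    congr 1 with y
    simp only [sub_eq_add_neg, ← EReal.coe_neg, EReal.coe_add]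
    abel
  have step4 : ((1 - γ : ℝ) : EReal) + (⨆ y : ℝ, g y - ((min 1 μ * max (ξ - y) 0 : ℝ) : EReal))
      = ⨆ y : ℝ, (g y + (((1 - γ) - min 1 μ * max (ξ - y) 0 : ℝ) : EReal)) := by
    rw [coe_add_iSup]
    congr 1 with y
    simp only [sub_eq_add_neg, ← EReal.coe_neg, EReal.coe_add]
    abel
  rw [step4]
  simp only [step1]
  rw [iSup_comm]
  congr 1 with y
  apply iSup_add_coe_attained
  · intro x
    have := real_bound μ ξ y hμ x
    linarith
  · obtain ⟨x, hx⟩ := real_attained μ ξ y hμ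
    exact ⟨x, by linarith⟩

lemma ge_piE_iff {γ : ℝ} (hγ : 0 < γ) (a : EReal) :
    (γ : EReal) ≤ piE a ↔ (γ : EReal) ≤ a := by
  rw [piE]
  split_ifs with h
  · rfl
  · simp only [le_bot_iff, EReal.coe_ne_bot, false_iff]
    intro hle
    exact h (le_trans (by exact_mod_cast hγ.le) hle)

/-- if `sup g₀ = γ`, then for all `n ≥ 1`,
`s_n = sup{ ξ : sup_x Φ_ξ[g_{n−1}](x) ≥ γ }` and `g_n = π ∘ Φ_{s_n}[g_{n−1}]`. -/
theorem alternative_dynamic (γ μ : ℝ) (hγ : γ ∈ Set.Ioo (0 : ℝ) 1) (hμ : 0 < μ)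
    (g0 : ℝ → EReal) (hsup : (⨆ x : ℝ, g0 x) = (γ : EReal)) :
    ∀ n : ℕ, 1 ≤ n →
      sFun γ μ (gseq γ μ g0 (n - 1)) =
        sSup {ξ : ℝ | (γ : EReal) ≤ ⨆ x : ℝ, Phi γ μ (gseq γ μ g0 (n - 1)) ξ x} ∧
      gseq γ μ g0 n =
        fun x => piE (Phi γ μ (gseq γ μ g0 (n - 1))
          (sFun γ μ (gseq γ μ g0 (n - 1))) x) := by
  intro n hn
  obtain ⟨m, rfl⟩ : ∃ m, n = m + 1 := ⟨n - 1, (Nat.succ_pred_eq_of_pos hn).symm⟩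
  simp only [Nat.add_sub_cancel]
  refine ⟨?_, rfl⟩
  rw [sFun]
  congr 1
  ext ξ
  simp only [Set.mem_setOf_eq, pFun, sup_Phi γ μ hμ (gseq γ μ g0 m) ξ,
    ge_piE_iff hγ.1]
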